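/- Let λ be an atomless positive Radon measure on ∂ℍⁿ with 0 < λ(∂ℍⁿ) < ∞. Then the function B_λ(p) = ∫_{∂ℍⁿ} B_θ(p) dλ(θ) is proper, strictly convex (its Hessian is positive definite at every point), and has a unique critical point in ℍⁿ, which is its unique global minimum. -/

import Mathlib

open MeasureTheory

noncomputable section

/-- The Minkowski bilinear form of signature `(1, n)` on `ℝ^{n+1}`. -/
def mink {n : ℕ} (x y : Fin (n + 1) → ℝ) : ℝ :=
  -(x 0 * y 0) + ∑ i : Fin n, x i.succ * y i.succ

/-- Hyperbolic geodesic in the hyperboloid model through `p` with initial velocity `v`. -/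
def hypGeod {n : ℕ} (p v : Fin (n + 1) → ℝ) (t : ℝ) : Fin (n + 1) → ℝ :=
  Real.cosh (Real.sqrt (mink v v) * t) • p +
    (Real.sinh (Real.sqrt (mink v v) * t) / Real.sqrt (mink v v)) • v

/-- The boundary sphere `∂ℍⁿ ≅ S^{n-1}`: a unit vector `θ` corresponds to the
future-pointing null vector `(1, θ)`. -/
def nullVec {n : ℕ} (θ : EuclideanSpace ℝ (Fin n)) : Fin (n + 1) → ℝ :=
  Fin.cons 1 fun i => θ i

/-- The Busemann function of the boundary point `θ ∈ ∂ℍⁿ = S^{n-1}`, normalized to vanish at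
the basepoint `o = (1,0,…,0)`: `B_θ(q) = log (−⟪q, (1,θ)⟫)`. -/
def busemannSph {n : ℕ} (θ : EuclideanSpace ℝ (Fin n)) (q : Fin (n + 1) → ℝ) : ℝ :=
  Real.log (-(mink q (nullVec θ)))

/-- The average `B_λ(q) = ∫_{∂ℍⁿ} B_θ(q) dλ(θ)` of Busemann functions against a measure `λ`
on the boundary sphere. -/
def busemannAvg {n : ℕ} (lam : Measure (Metric.sphere (0 : EuclideanSpace ℝ (Fin n)) 1))
    (q : Fin (n + 1) → ℝ) : ℝ :=
  ∫ θ, busemannSph (θ : EuclideanSpace ℝ (Fin n)) q ∂lam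

open Real

namespace BAvg

variable {n : ℕ}

/-- tail of a vector, as a Euclidean vector -/
def tl (q : Fin (n + 1) → ℝ) : EuclideanSpace ℝ (Fin n) := WithLp.toLp 2 fun i => q i.succ

lemma tl_apply (q : Fin (n + 1) → ℝ) (i : Fin n) : tl q i = q i.succ := rfl

lemma mink_symm (x y : Fin (n + 1) → ℝ) : mink x y = mink y x := by
  unfold mink; simp [mul_comm]

lemma mink_comb_left (a b : ℝ) (x y z : Fin (n + 1) → ℝ) :
    mink (a • x + b • y) z = a * mink x z + b * mink y z := by
  simp only [mink, Pi.add_apply, Pi.smul_apply, smul_eq_mul, add_mul, mul_assoc,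
    Finset.sum_add_distrib, ← Finset.mul_sum]
  ring

lemma mink_comb_right (a b : ℝ) (x y z : Fin (n + 1) → ℝ) :
    mink z (a • x + b • y) = a * mink z x + b * mink z y := by
  rw [mink_symm, mink_comb_left, mink_symm x z, mink_symm y z]

lemma mink_smul_left (a : ℝ) (x z : Fin (n + 1) → ℝ) : mink (a • x) z = a * mink x z := by
  have := mink_comb_left a 0 x 0 z; simpa using this

lemma mink_sub_left (x y z : Fin (n + 1) → ℝ) : mink (x - y) z = mink x z - mink y z := by
  have := mink_comb_left 1 (-1) x y z; simp at this
  rw [show x - y = x + (-1 : ℝ) • y by module] at *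
  have := mink_comb_left 1 (-1) x y z; simpa [sub_eq_add_neg] using this

lemma mink_eq_inner (x y : Fin (n + 1) → ℝ) :
    mink x y = -(x 0 * y 0) + inner ℝ (tl x) (tl y) := by
  rw [PiLp.inner_apply]; unfold mink; simp [tl, mul_comm]

lemma mink_self_eq (x : Fin (n + 1) → ℝ) : mink x x = -(x 0 ^ 2) + ‖tl x‖ ^ 2 := by
  rw [mink_eq_inner, real_inner_self_eq_norm_sq]; ring

lemma eq_zero_of_parts {v : Fin (n + 1) → ℝ} (h0 : v 0 = 0) (ht : tl v = 0) : v = 0 := by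
  funext i
  refine Fin.cases ?_ (fun j => ?_) i
  · exact h0
  · have := congrArg (fun x => x j) ht; simpa [tl] using this

/-- On the hyperboloid, `‖tl p‖ < p 0`. -/
lemma tl_norm_lt {p : Fin (n + 1) → ℝ} (hp : mink p p = -1) (hp0 : 0 < p 0) :
    ‖tl p‖ < p 0 := by
  have h := mink_self_eq p
  rw [hp] at h
  nlinarith [norm_nonneg (tl p)]

/-- Positive-definiteness of mink on the orthogonal complement of a hyperboloid point. -/
lemma mink_orth_pos {p v : Fin (n + 1) → ℝ} (hp : mink p p = -1) (hp0 : 0 < p 0)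
    (hv : mink p v = 0) (hvne : v ≠ 0) : 0 < mink v v := by
  have h := mink_eq_inner p v
  rw [hv] at h
  have hinner : v 0 * p 0 = inner ℝ (tl p) (tl v) := by linarith [h]
  have hCS : |(inner ℝ (tl p) (tl v) : ℝ)| ≤ ‖tl p‖ * ‖tl v‖ := abs_real_inner_le_norm _ _
  have hlt := tl_norm_lt hp hp0
  have hself := mink_self_eq v
  by_cases htv : tl v = 0
  · exfalso
    have hv0 : v 0 = 0 := by
      have : v 0 * p 0 = 0 := by rw [hinner, htv]; simp
      exact (mul_eq_zero.1 this).resolve_right (by positivity)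
    exact hvne (eq_zero_of_parts hv0 htv)
  · have htvpos : 0 < ‖tl v‖ := norm_pos_iff.2 htv
    have h1 : |v 0| * p 0 ≤ ‖tl p‖ * ‖tl v‖ := by
      calc |v 0| * p 0 = |v 0 * p 0| := by rw [abs_mul, abs_of_pos hp0]
      _ = |(inner ℝ (tl p) (tl v) : ℝ)| := by rw [hinner]
      _ ≤ _ := hCS
    have h2 : |v 0| * p 0 < p 0 * ‖tl v‖ := lt_of_le_of_lt h1 (by nlinarith)
    have h3 : |v 0| < ‖tl v‖ := by nlinarith
    have := abs_nonneg (v 0)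
    nlinarith [sq_abs (v 0)]

/-- Cauchy–Schwarz on `p^⊥` with equality information. -/
lemma mink_cs {p v w : Fin (n + 1) → ℝ} (hp : mink p p = -1) (hp0 : 0 < p 0)
    (hv : mink p v = 0) (hw : mink p w = 0) (hvv : 0 < mink v v) :
    mink v w ^ 2 ≤ mink v v * mink w w ∧
      (mink v w ^ 2 = mink v v * mink w w → (mink v v) • w = (mink v w) • v) := by
  set u : Fin (n + 1) → ℝ := (mink v v) • w + (-(mink v w)) • v with hu
  have hpu : mink p u = 0 := by
    rw [hu, mink_comb_right, hv, hw]; ring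
  have huu : mink u u = mink v v * (mink v v * mink w w - mink v w ^ 2) := by
    rw [hu, mink_comb_left, mink_comb_right, mink_comb_right,
      mink_symm w v]
    ring
  have hu_nonneg : 0 ≤ mink u u := by
    by_cases h : u = 0
    · rw [h]; unfold mink; simp
    · exact (mink_orth_pos hp hp0 hpu h).le
  constructor
  · nlinarith
  · intro heq
    have : mink u u = 0 := by rw [huu, heq]; ring
    have hu0 : u = 0 := by
      by_contra h
      exact absurd this (ne_of_gt (mink_orth_pos hp hp0 hpu h))
    have : (mink v v) • w = (mink v w) • v := by
      have := hu0
      rw [hu] at this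
      funext i
      have := congrFun this i
      simp at this ⊢
      linarith
    exact this



/-! ### The function `Aq` -/

def Aq (q : Fin (n + 1) → ℝ) (θ : EuclideanSpace ℝ (Fin n)) : ℝ := q 0 - inner ℝ (tl q) θ

lemma inner_tl (q : Fin (n + 1) → ℝ) (θ : EuclideanSpace ℝ (Fin n)) :
    (inner ℝ (tl q) θ : ℝ) = ∑ i : Fin n, q i.succ * θ i := by
  rw [PiLp.inner_apply]
  simp [tl, RCLike.inner_apply, conj_trivial]
  exact Finset.sum_congr rfl fun i _ => mul_comm _ _

lemma neg_mink_nullVec (q : Fin (n + 1) → ℝ) (θ : EuclideanSpace ℝ (Fin n)) :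
    -(mink q (nullVec θ)) = Aq q θ := by
  unfold mink Aq nullVec
  rw [inner_tl]
  simp only [Fin.cons_zero, Fin.cons_succ]
  ring

lemma busemannSph_eq (θ : EuclideanSpace ℝ (Fin n)) (q : Fin (n + 1) → ℝ) :
    busemannSph θ q = Real.log (Aq q θ) := by
  rw [busemannSph, neg_mink_nullVec]

lemma tl_comb (a b : ℝ) (x y : Fin (n + 1) → ℝ) :
    tl (a • x + b • y) = a • tl x + b • tl y := by
  ext i; simp [tl]

lemma Aq_comb (a b : ℝ) (x y : Fin (n + 1) → ℝ) (θ : EuclideanSpace ℝ (Fin n)) :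
    Aq (a • x + b • y) θ = a * Aq x θ + b * Aq y θ := by
  unfold Aq
  rw [tl_comb, inner_add_left, real_inner_smul_left, real_inner_smul_left]
  simp [Pi.add_apply, Pi.smul_apply, smul_eq_mul]
  ring

lemma Aq_abs_inner_le (q : Fin (n + 1) → ℝ) {θ : EuclideanSpace ℝ (Fin n)} (hθ : ‖θ‖ = 1) :
    |(inner ℝ (tl q) θ : ℝ)| ≤ ‖tl q‖ := by
  calc |(inner ℝ (tl q) θ : ℝ)| ≤ ‖tl q‖ * ‖θ‖ := abs_real_inner_le_norm _ _
  _ = ‖tl q‖ := by rw [hθ, mul_one]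

lemma Aq_lb (q : Fin (n + 1) → ℝ) {θ : EuclideanSpace ℝ (Fin n)} (hθ : ‖θ‖ = 1) :
    q 0 - ‖tl q‖ ≤ Aq q θ := by
  have := Aq_abs_inner_le q hθ; unfold Aq
  have := abs_le.1 this
  linarith [this.2]

lemma Aq_ub (q : Fin (n + 1) → ℝ) {θ : EuclideanSpace ℝ (Fin n)} (hθ : ‖θ‖ = 1) :
    Aq q θ ≤ q 0 + ‖tl q‖ := by
  have := abs_le.1 (Aq_abs_inner_le q hθ); unfold Aq
  linarith [this.1]

lemma Aq_abs_le (q : Fin (n + 1) → ℝ) {θ : EuclideanSpace ℝ (Fin n)} (hθ : ‖θ‖ = 1) :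
    |Aq q θ| ≤ |q 0| + ‖tl q‖ := by
  calc |Aq q θ| = |q 0 + -(inner ℝ (tl q) θ : ℝ)| := by rw [Aq, sub_eq_add_neg]
  _ ≤ |q 0| + |(-(inner ℝ (tl q) θ : ℝ))| := abs_add_le _ _
  _ = |q 0| + |(inner ℝ (tl q) θ : ℝ)| := by rw [abs_neg]
  _ ≤ |q 0| + ‖tl q‖ := by linarith [Aq_abs_inner_le q hθ]

lemma Aq_pos {p : Fin (n + 1) → ℝ} (hp : mink p p = -1) (hp0 : 0 < p 0)
    {θ : EuclideanSpace ℝ (Fin n)} (hθ : ‖θ‖ = 1) : 0 < Aq p θ :=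
  lt_of_lt_of_le (by linarith [tl_norm_lt hp hp0]) (Aq_lb p hθ)

lemma mink_nullVec_self {θ : EuclideanSpace ℝ (Fin n)} (hθ : ‖θ‖ = 1) :
    mink (nullVec θ) (nullVec θ) = 0 := by
  unfold mink nullVec
  simp only [Fin.cons_zero, Fin.cons_succ]
  have : ∑ i : Fin n, θ i * θ i = ‖θ‖ ^ 2 := by
    rw [← real_inner_self_eq_norm_sq, PiLp.inner_apply]
    simp [RCLike.inner_apply, conj_trivial]
    simp only [sq]
  rw [this, hθ]; norm_num

lemma mink_nullVec_left (q : Fin (n + 1) → ℝ) (θ : EuclideanSpace ℝ (Fin n)) :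
    mink (nullVec θ) q = -(Aq q θ) := by
  rw [mink_symm, ← neg_mink_nullVec]; ring

/-! ### Key Cauchy–Schwarz inequality against null vectors -/

lemma key_ineq {p v : Fin (n + 1) → ℝ} (hp : mink p p = -1) (hp0 : 0 < p 0)
    (hv : mink p v = 0) (hvv : 0 < mink v v) {θ : EuclideanSpace ℝ (Fin n)} (hθ : ‖θ‖ = 1) :
    (Aq v θ) ^ 2 ≤ mink v v * (Aq p θ) ^ 2 ∧
      ((Aq v θ) ^ 2 = mink v v * (Aq p θ) ^ 2 →
        (mink v v) • (nullVec θ - (Aq p θ) • p) = (-(Aq v θ)) • v) := by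
  set a := Aq p θ with ha
  set b := Aq v θ with hb
  set w : Fin (n + 1) → ℝ := nullVec θ - a • p with hw
  have hw' : nullVec θ = (1 : ℝ) • w + a • p := by rw [hw]; module
  have hpξ : mink p (nullVec θ) = -a := by
    rw [mink_symm, mink_nullVec_left]
  have hvξ : mink v (nullVec θ) = -b := by
    rw [mink_symm, mink_nullVec_left]
  have hpw : mink p w = 0 := by
    have : mink p (nullVec θ) = mink p w + a * mink p p := by
      rw [hw']
      rw [mink_comb_right]; ring
    rw [hpξ, hp] at this; linarith
  have hvw : mink v w = -b := by
    have : mink v (nullVec θ) = mink v w + a * mink v p := by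
      rw [hw', mink_comb_right]; ring
    rw [hvξ, mink_symm v p, hv] at this; linarith
  have hww : mink w w = a ^ 2 := by
    have h0 := mink_nullVec_self hθ
    rw [hw'] at h0
    rw [mink_comb_left, mink_comb_right, mink_comb_right, hp, hpw, mink_symm w p, hpw] at h0
    linarith
  obtain ⟨hle, heqc⟩ := mink_cs hp hp0 hv hpw hvv
  rw [hvw, hww] at hle heqc
  constructor
  · nlinarith
  · intro h
    exact heqc (by nlinarith)

/-- The two exceptional boundary points for a geodesic `(p, v)`. -/
def excT (p v : Fin (n + 1) → ℝ) (σ : ℝ) : EuclideanSpace ℝ (Fin n) :=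
  (((p + σ • v) 0)⁻¹ : ℝ) • tl (p + σ • v)

lemma eq_excT_of_eq {p v : Fin (n + 1) → ℝ} (hp : mink p p = -1) (hp0 : 0 < p 0)
    (hv : mink p v = 0) (hvv : 0 < mink v v) {θ : EuclideanSpace ℝ (Fin n)} (hθ : ‖θ‖ = 1)
    (heq : (Aq v θ) ^ 2 = mink v v * (Aq p θ) ^ 2) :
    θ = excT p v (-(Real.sqrt (mink v v))⁻¹) ∨ θ = excT p v (Real.sqrt (mink v v))⁻¹ := by
  set s := Real.sqrt (mink v v) with hsdef
  have hs2 : s ^ 2 = mink v v := Real.sq_sqrt hvv.le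
  have hs : 0 < s := Real.sqrt_pos.2 hvv
  set a := Aq p θ with ha
  set b := Aq v θ with hb
  have hapos : 0 < a := Aq_pos hp hp0 hθ
  have hkey := (key_ineq hp hp0 hv hvv hθ).2 heq
  -- nullVec θ = a • p + (-(b) / mink v v) • v
  have hξ : nullVec θ = a • p + (-b / mink v v) • v := by
    have h1 : (mink v v) • (nullVec θ) = (mink v v) • ((Aq p θ) • p) + (-(Aq v θ)) • v := by
      have := hkey
      rw [smul_sub] at this
      funext i
      have := congrFun this i
      simp at this ⊢
      linarith
    funext i
    have := congrFun h1 i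
    simp at this ⊢
    have hne : mink v v ≠ 0 := ne_of_gt hvv
    field_simp
    linarith
  -- b = s*a or b = -(s*a)
  have hcases : b = s * a ∨ b = -(s * a) := by
    have : b ^ 2 = (s * a) ^ 2 := by rw [heq, ← hs2]; ring
    rcases sq_eq_sq_iff_eq_or_eq_neg.1 this with h | h
    · left; exact h
    · right; exact h
  have hfin : ∀ σ : ℝ, nullVec θ = a • (p + σ • v) → θ = excT p v σ := by
    intro σ hξσ
    have h0 : (1 : ℝ) = a * ((p + σ • v) 0) := by
      have := congrFun hξσ 0
      simpa [nullVec, Fin.cons_zero] using this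
    have hne : ((p + σ • v) 0) ≠ 0 := by
      intro hc; rw [hc] at h0; simp at h0
    have h0' : a * ((p + σ • v) 0) = 1 := by
      simpa using h0.symm
    have hainv : a = ((p + σ • v) 0)⁻¹ := eq_inv_of_mul_eq_one_left (by linarith [mul_comm a ((p + σ • v) 0)])
    ext i
    have := congrFun hξσ i.succ
    simp only [nullVec, Fin.cons_succ, Pi.smul_apply, smul_eq_mul] at this
    rw [excT]
    simp only [PiLp.smul_apply, smul_eq_mul, tl_apply]
    rw [← hainv, this]
  rcases hcases with hcb | hcb
  · left
    apply hfin
    rw [hξ, hcb, ← hs2]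
    funext i; simp; ring_nf
    rw [mul_comm]
    congr 1
    field_simp
  · right
    apply hfin
    rw [hξ, hcb, ← hs2]
    funext i; simp; ring_nf
    rw [mul_comm]
    congr 1
    field_simp


/-! ### Scalar geodesic functions -/

lemma abs_sinh_lt_cosh (x : ℝ) : |Real.sinh x| < Real.cosh x := by
  have h := Real.cosh_sq x
  have hc := Real.cosh_pos x
  nlinarith [sq_abs (Real.sinh x), abs_nonneg (Real.sinh x)]

lemma exp_neg_abs_le_cosh_sub (x : ℝ) : Real.exp (-|x|) ≤ Real.cosh x - |Real.sinh x| := by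
  rcases abs_cases x with ⟨h1, _⟩ | ⟨h1, _⟩ <;> rw [h1] <;>
    rcases abs_cases (Real.sinh x) with ⟨h2, _⟩ | ⟨h2, _⟩ <;> rw [h2] <;>
    rw [Real.cosh_eq, Real.sinh_eq] <;> ring_nf <;>
    exact Real.exp_le_exp.2 (by linarith)

lemma cosh_add_abs_sinh_le (x : ℝ) : Real.cosh x + |Real.sinh x| ≤ Real.exp |x| := by
  rcases abs_cases x with ⟨h1, _⟩ | ⟨h1, _⟩ <;> rw [h1] <;>
    rcases abs_cases (Real.sinh x) with ⟨h2, _⟩ | ⟨h2, _⟩ <;> rw [h2] <;>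
    rw [Real.cosh_eq, Real.sinh_eq] <;> ring_nf <;>
    exact Real.exp_le_exp.2 (by linarith)

def Gf (a b s t : ℝ) : ℝ := Real.cosh (s * t) * a + (Real.sinh (s * t) / s) * b

def Gf' (a b s t : ℝ) : ℝ := s * Real.sinh (s * t) * a + Real.cosh (s * t) * b

section scalarG

variable {a b s : ℝ}

lemma abs_b_le (ha : 0 < a) (hs : 0 < s) (hb : b ^ 2 ≤ s ^ 2 * a ^ 2) : |b| ≤ s * a := by
  nlinarith [sq_abs b, abs_nonneg b, mul_pos hs ha]

lemma Gf_lb (ha : 0 < a) (hs : 0 < s) (hb : b ^ 2 ≤ s ^ 2 * a ^ 2) (t : ℝ) :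
    a * Real.exp (-|s * t|) ≤ Gf a b s t := by
  have hX : |(Real.sinh (s * t) / s) * b| ≤ a * |Real.sinh (s * t)| := by
    rw [abs_mul, abs_div, abs_of_pos hs, div_mul_eq_mul_div, div_le_iff₀ hs]
    calc |Real.sinh (s * t)| * |b| ≤ |Real.sinh (s * t)| * (s * a) := by
          exact mul_le_mul_of_nonneg_left (abs_b_le ha hs hb) (abs_nonneg _)
    _ = a * |Real.sinh (s * t)| * s := by ring
  have h2 := exp_neg_abs_le_cosh_sub (s * t)
  have h3 := neg_abs_le ((Real.sinh (s * t) / s) * b)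
  unfold Gf
  nlinarith

lemma Gf_pos (ha : 0 < a) (hs : 0 < s) (hb : b ^ 2 ≤ s ^ 2 * a ^ 2) (t : ℝ) :
    0 < Gf a b s t :=
  lt_of_lt_of_le (by positivity) (Gf_lb ha hs hb t)

lemma Gf_ub (ha : 0 < a) (hs : 0 < s) (hb : b ^ 2 ≤ s ^ 2 * a ^ 2) (t : ℝ) :
    Gf a b s t ≤ a * Real.exp |s * t| := by
  have hX : (Real.sinh (s * t) / s) * b ≤ a * |Real.sinh (s * t)| := by
    calc (Real.sinh (s * t) / s) * b ≤ |(Real.sinh (s * t) / s) * b| := le_abs_self _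
    _ ≤ a * |Real.sinh (s * t)| := by
        rw [abs_mul, abs_div, abs_of_pos hs, div_mul_eq_mul_div, div_le_iff₀ hs]
        calc |Real.sinh (s * t)| * |b| ≤ |Real.sinh (s * t)| * (s * a) := by
              exact mul_le_mul_of_nonneg_left (abs_b_le ha hs hb) (abs_nonneg _)
        _ = a * |Real.sinh (s * t)| * s := by ring
  have h2 := cosh_add_abs_sinh_le (s * t)
  unfold Gf
  nlinarith

lemma hasDerivAt_Gf (hs : s ≠ 0) (t : ℝ) : HasDerivAt (Gf a b s) (Gf' a b s t) t := by
  have h : HasDerivAt (fun t : ℝ => s * t) s t := by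
    simpa using (hasDerivAt_id t).const_mul s
  have h1 : HasDerivAt (fun t => Real.cosh (s * t)) (s * Real.sinh (s * t)) t := by
    simpa [mul_comm] using h.cosh
  have h2 : HasDerivAt (fun t => Real.sinh (s * t) / s) (Real.cosh (s * t)) t := by
    have := (h.sinh).div_const s
    simpa [mul_comm, mul_div_assoc, mul_div_cancel_left₀ _ hs] using this
  exact (h1.mul_const a).add (h2.mul_const b)

lemma hasDerivAt_Gf' (hs : s ≠ 0) (t : ℝ) :
    HasDerivAt (Gf' a b s) (s ^ 2 * Gf a b s t) t := by
  have h : HasDerivAt (fun t : ℝ => s * t) s t := by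
    simpa using (hasDerivAt_id t).const_mul s
  have h1 : HasDerivAt (fun t => s * Real.sinh (s * t)) (s * (Real.cosh (s * t) * s)) t :=
    (h.sinh).const_mul s
  have h2 : HasDerivAt (fun t => Real.cosh (s * t)) (Real.sinh (s * t) * s) t := h.cosh
  have := (h1.mul_const a).add (h2.mul_const b)
  have hG : s * (Real.cosh (s * t) * s) * a + Real.sinh (s * t) * s * b
      = s ^ 2 * Gf a b s t := by
    unfold Gf; field_simp
  rw [hG] at this
  exact this.congr_deriv rfl

lemma Gf_identity (hs : s ≠ 0) (t : ℝ) :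
    s ^ 2 * (Gf a b s t) ^ 2 - (Gf' a b s t) ^ 2 = s ^ 2 * a ^ 2 - b ^ 2 := by
  have hc := Real.cosh_sq (s * t)
  unfold Gf Gf'
  field_simp
  nlinarith [hc]

lemma Gf'_div_abs_le (ha : 0 < a) (hs : 0 < s) (hb : b ^ 2 ≤ s ^ 2 * a ^ 2) (t : ℝ) :
    |Gf' a b s t / Gf a b s t| ≤ s := by
  have hg := Gf_pos ha hs hb t
  have hid := Gf_identity (a := a) (b := b) hs.ne' t
  have h1 : (Gf' a b s t) ^ 2 ≤ s ^ 2 * (Gf a b s t) ^ 2 := by nlinarith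
  rw [abs_div, abs_of_pos hg, div_le_iff₀ hg]
  nlinarith [abs_nonneg (Gf' a b s t), sq_abs (Gf' a b s t), mul_pos hs hg]

lemma hasDerivAt_logGf (ha : 0 < a) (hs : 0 < s) (hb : b ^ 2 ≤ s ^ 2 * a ^ 2) (t : ℝ) :
    HasDerivAt (fun t => Real.log (Gf a b s t)) (Gf' a b s t / Gf a b s t) t :=
  (hasDerivAt_Gf hs.ne' t).log (Gf_pos ha hs hb t).ne'

lemma hasDerivAt_ratio (ha : 0 < a) (hs : 0 < s) (hb : b ^ 2 ≤ s ^ 2 * a ^ 2) (t : ℝ) :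
    HasDerivAt (fun t => Gf' a b s t / Gf a b s t)
      ((s ^ 2 * a ^ 2 - b ^ 2) / (Gf a b s t) ^ 2) t := by
  have hg := Gf_pos ha hs hb t
  have := (hasDerivAt_Gf' (a := a) (b := b) hs.ne' t).div (hasDerivAt_Gf (a := a) (b := b) hs.ne' t) hg.ne'
  have hval : (s ^ 2 * Gf a b s t * Gf a b s t - Gf' a b s t * Gf' a b s t) / Gf a b s t ^ 2
      = (s ^ 2 * a ^ 2 - b ^ 2) / (Gf a b s t) ^ 2 := by
    rw [← Gf_identity (a := a) (b := b) hs.ne' t]; ring_nf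
  rw [hval] at this
  exact this

lemma ratio_deriv_nonneg (ha : 0 < a) (hs : 0 < s) (hb : b ^ 2 ≤ s ^ 2 * a ^ 2) (t : ℝ) :
    0 ≤ (s ^ 2 * a ^ 2 - b ^ 2) / (Gf a b s t) ^ 2 := by
  have hg := Gf_pos ha hs hb t
  apply div_nonneg
  · nlinarith
  · positivity

lemma ratio_deriv_le (ha : 0 < a) (hs : 0 < s) (hb : b ^ 2 ≤ s ^ 2 * a ^ 2) {t T : ℝ}
    (hT : |t| ≤ T) : (s ^ 2 * a ^ 2 - b ^ 2) / (Gf a b s t) ^ 2 ≤ s ^ 2 * Real.exp (2 * s * T) := by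
  have hlb := Gf_lb ha hs hb t
  have hg := Gf_pos ha hs hb t
  have hsT : |s * t| ≤ s * T := by
    rw [abs_mul, abs_of_pos hs]
    exact mul_le_mul_of_nonneg_left hT hs.le
  have hlb2 : a * Real.exp (-(s * T)) ≤ Gf a b s t := by
    refine le_trans ?_ hlb
    have : Real.exp (-(s*T)) ≤ Real.exp (-|s * t|) := Real.exp_le_exp.2 (by linarith)
    nlinarith
  have hglb : 0 < a * Real.exp (-(s * T)) := by positivity
  rw [div_le_iff₀ (by positivity)]
  have hsq : (a * Real.exp (-(s * T))) ^ 2 ≤ (Gf a b s t) ^ 2 := by nlinarith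
  have hexp : Real.exp (-(s * T)) ^ 2 * Real.exp (2 * s * T) = 1 := by
    rw [sq, ← Real.exp_add, ← Real.exp_add]
    rw [show -(s * T) + -(s * T) + 2 * s * T = 0 by ring, Real.exp_zero]
  have h5 : s ^ 2 * Real.exp (2 * s * T) * (a * Real.exp (-(s * T))) ^ 2
      ≤ s ^ 2 * Real.exp (2 * s * T) * (Gf a b s t) ^ 2 :=
    mul_le_mul_of_nonneg_left hsq (by positivity)
  have h6 : s ^ 2 * Real.exp (2 * s * T) * (a * Real.exp (-(s * T))) ^ 2 = s ^ 2 * a ^ 2 := by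
    linear_combination s ^ 2 * a ^ 2 * hexp
  linarith [h5, h6, sq_nonneg b]

end scalarG

/-! ### Parametric integrals along geodesics -/

lemma abs_log_le {x L U : ℝ} (hL : 0 < L) (h1 : L ≤ x) (h2 : x ≤ U) :
    |Real.log x| ≤ |Real.log L| + |Real.log U| := by
  have l1 : Real.log L ≤ Real.log x := Real.log_le_log hL h1
  have l2 : Real.log x ≤ Real.log U := Real.log_le_log (by linarith) h2
  rw [abs_le]
  constructor
  · linarith [neg_abs_le (Real.log L), abs_nonneg (Real.log U)]
  · linarith [le_abs_self (Real.log U), abs_nonneg (Real.log L)]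

section parametric

variable {n : ℕ} (lam : Measure (Metric.sphere (0 : EuclideanSpace ℝ (Fin n)) 1))
  [IsFiniteMeasure lam] {p v : Fin (n + 1) → ℝ}

lemma sphere_norm (θ : Metric.sphere (0 : EuclideanSpace ℝ (Fin n)) 1) :
    ‖(θ : EuclideanSpace ℝ (Fin n))‖ = 1 := by
  have := θ.2; rwa [mem_sphere_zero_iff_norm] at this

lemma continuous_Aq (q : Fin (n + 1) → ℝ) :
    Continuous (fun θ : Metric.sphere (0 : EuclideanSpace ℝ (Fin n)) 1 => Aq q θ.val) :=
  continuous_const.sub (Continuous.inner continuous_const continuous_subtype_val)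

lemma hypGeod_zero : hypGeod p v 0 = p := by
  unfold hypGeod; simp

lemma Aq_hypGeod (t : ℝ) (θ : EuclideanSpace ℝ (Fin n)) :
    Aq (hypGeod p v t) θ = Gf (Aq p θ) (Aq v θ) (Real.sqrt (mink v v)) t := by
  rw [hypGeod, Aq_comb, Gf]

section withHyp

lemma bAvg_eq (t : ℝ) :
    busemannAvg lam (hypGeod p v t) =
      ∫ θ, Real.log (Gf (Aq p θ.val) (Aq v θ.val) (Real.sqrt (mink v v)) t) ∂lam := by
  unfold busemannAvg
  refine integral_congr_ae (Filter.Eventually.of_forall fun θ => ?_)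
  simp only [busemannSph_eq, Aq_hypGeod]

/-- data bundle: positivity and Cauchy–Schwarz, per θ -/
lemma aP_pos (hp : mink p p = -1) (hp0 : 0 < p 0) (θ : Metric.sphere (0 : EuclideanSpace ℝ (Fin n)) 1) : 0 < Aq p θ.val :=
  Aq_pos hp hp0 (sphere_norm θ)

lemma bV_sq_le (hp : mink p p = -1) (hp0 : 0 < p 0) (hv : mink p v = 0)
    (hvv : 0 < mink v v) (θ : Metric.sphere (0 : EuclideanSpace ℝ (Fin n)) 1) :
    (Aq v θ.val) ^ 2 ≤ (Real.sqrt (mink v v)) ^ 2 * (Aq p θ.val) ^ 2 := by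
  rw [Real.sq_sqrt hvv.le]
  exact (key_ineq hp hp0 hv hvv (sphere_norm θ)).1

lemma sqrt_mink_pos (hvv : 0 < mink v v) : 0 < Real.sqrt (mink v v) := Real.sqrt_pos.2 hvv

lemma continuous_Gf (hvv : 0 < mink v v) (t : ℝ) :
    Continuous (fun θ : Metric.sphere (0 : EuclideanSpace ℝ (Fin n)) 1 =>
      Gf (Aq p θ.val) (Aq v θ.val) (Real.sqrt (mink v v)) t) := by
  unfold Gf
  exact (continuous_const.mul (continuous_Aq p)).add (continuous_const.mul (continuous_Aq v))

lemma continuous_Gf' (hvv : 0 < mink v v) (t : ℝ) :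
    Continuous (fun θ : Metric.sphere (0 : EuclideanSpace ℝ (Fin n)) 1 =>
      Gf' (Aq p θ.val) (Aq v θ.val) (Real.sqrt (mink v v)) t) := by
  unfold Gf'
  exact (continuous_const.mul (continuous_Aq p)).add (continuous_const.mul (continuous_Aq v))

lemma integrable_log_Gf (hp : mink p p = -1) (hp0 : 0 < p 0) (hv : mink p v = 0)
    (hvv : 0 < mink v v) (t : ℝ) :
    Integrable (fun θ : Metric.sphere (0 : EuclideanSpace ℝ (Fin n)) 1 =>
      Real.log (Gf (Aq p θ.val) (Aq v θ.val) (Real.sqrt (mink v v)) t)) lam := by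
  set s := Real.sqrt (mink v v)
  have hs : 0 < s := sqrt_mink_pos hvv
  set L : ℝ := (p 0 - ‖tl p‖) * Real.exp (-|s * t|) with hL
  set U : ℝ := (p 0 + ‖tl p‖) * Real.exp |s * t| with hU
  have hLpos : 0 < L := by
    have := tl_norm_lt hp hp0
    exact mul_pos (by linarith) (Real.exp_pos _)
  refine ⟨((continuous_Gf hvv t).log ?_).aestronglyMeasurable, ?_⟩
  · intro θ
    exact (Gf_pos (aP_pos hp hp0 θ) hs (bV_sq_le hp hp0 hv hvv θ) t).ne'
  refine HasFiniteIntegral.of_bounded (C := |Real.log L| + |Real.log U|)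
    (Filter.Eventually.of_forall fun θ => ?_)
  have ha := aP_pos hp hp0 θ
  have hb := bV_sq_le hp hp0 hv hvv θ
  have h1 : L ≤ Gf (Aq p θ.val) (Aq v θ.val) s t := by
    refine le_trans ?_ (Gf_lb ha hs hb t)
    have := Aq_lb p (sphere_norm θ)
    have he := Real.exp_pos (-|s * t|)
    nlinarith
  have h2 : Gf (Aq p θ.val) (Aq v θ.val) s t ≤ U := by
    refine le_trans (Gf_ub ha hs hb t) ?_
    have := Aq_ub p (sphere_norm θ)
    have he := Real.exp_pos |s * t|
    nlinarith
  exact abs_log_le hLpos h1 h2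

lemma hasDerivAt_bAvg (hp : mink p p = -1) (hp0 : 0 < p 0) (hv : mink p v = 0)
    (hvv : 0 < mink v v) (t₀ : ℝ) :
    HasDerivAt (fun t => busemannAvg lam (hypGeod p v t))
      (∫ θ, Gf' (Aq p θ.val) (Aq v θ.val) (Real.sqrt (mink v v)) t₀ /
        Gf (Aq p θ.val) (Aq v θ.val) (Real.sqrt (mink v v)) t₀ ∂lam) t₀ := by
  set s := Real.sqrt (mink v v)
  have hs : 0 < s := sqrt_mink_pos hvv
  have key := hasDerivAt_integral_of_dominated_loc_of_deriv_le (μ := lam) (x₀ := t₀)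
    (F := fun t θ => Real.log (Gf (Aq p θ.val) (Aq v θ.val) s t))
    (F' := fun t θ => Gf' (Aq p θ.val) (Aq v θ.val) s t / Gf (Aq p θ.val) (Aq v θ.val) s t)
    (bound := fun _ => s) (s := Metric.ball t₀ 1) (Metric.ball_mem_nhds t₀ one_pos)
    (Filter.Eventually.of_forall fun t =>
      (((continuous_Gf hvv t).log fun θ =>
        (Gf_pos (aP_pos hp hp0 θ) hs (bV_sq_le hp hp0 hv hvv θ) t).ne').aestronglyMeasurable))
    (integrable_log_Gf lam hp hp0 hv hvv t₀)
    (((continuous_Gf' hvv t₀).div (continuous_Gf hvv t₀) fun θ =>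
      (Gf_pos (aP_pos hp hp0 θ) hs (bV_sq_le hp hp0 hv hvv θ) t₀).ne').aestronglyMeasurable)
    (Filter.Eventually.of_forall fun θ t _ => by
      simp only [Real.norm_eq_abs]
      exact Gf'_div_abs_le (aP_pos hp hp0 θ) hs (bV_sq_le hp hp0 hv hvv θ) t)
    (integrable_const s)
    (Filter.Eventually.of_forall fun θ t _ =>
      hasDerivAt_logGf (aP_pos hp hp0 θ) hs (bV_sq_le hp hp0 hv hvv θ) t)
  have heq : (fun t => busemannAvg lam (hypGeod p v t)) =
      fun t => ∫ θ, Real.log (Gf (Aq p θ.val) (Aq v θ.val) s t) ∂lam :=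
    funext fun t => bAvg_eq lam t
  rw [heq]
  exact key.2

lemma integrable_ratio (hp : mink p p = -1) (hp0 : 0 < p 0) (hv : mink p v = 0)
    (hvv : 0 < mink v v) (t : ℝ) :
    Integrable (fun θ : Metric.sphere (0 : EuclideanSpace ℝ (Fin n)) 1 =>
      Gf' (Aq p θ.val) (Aq v θ.val) (Real.sqrt (mink v v)) t /
        Gf (Aq p θ.val) (Aq v θ.val) (Real.sqrt (mink v v)) t) lam := by
  set s := Real.sqrt (mink v v)
  have hs : 0 < s := sqrt_mink_pos hvv
  refine ⟨((continuous_Gf' hvv t).div (continuous_Gf hvv t) fun θ =>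
    (Gf_pos (aP_pos hp hp0 θ) hs (bV_sq_le hp hp0 hv hvv θ) t).ne').aestronglyMeasurable, ?_⟩
  refine HasFiniteIntegral.of_bounded (C := s) (Filter.Eventually.of_forall fun θ => ?_)
  exact Gf'_div_abs_le (aP_pos hp hp0 θ) hs (bV_sq_le hp hp0 hv hvv θ) t

lemma hasDerivAt_I1 (hp : mink p p = -1) (hp0 : 0 < p 0) (hv : mink p v = 0)
    (hvv : 0 < mink v v) (t₀ : ℝ) :
    HasDerivAt (fun t => ∫ θ, Gf' (Aq p θ.val) (Aq v θ.val) (Real.sqrt (mink v v)) t /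
        Gf (Aq p θ.val) (Aq v θ.val) (Real.sqrt (mink v v)) t ∂lam)
      (∫ θ, ((Real.sqrt (mink v v)) ^ 2 * (Aq p θ.val) ^ 2 - (Aq v θ.val) ^ 2) /
        (Gf (Aq p θ.val) (Aq v θ.val) (Real.sqrt (mink v v)) t₀) ^ 2 ∂lam) t₀ := by
  set s := Real.sqrt (mink v v)
  have hs : 0 < s := sqrt_mink_pos hvv
  have key := hasDerivAt_integral_of_dominated_loc_of_deriv_le (μ := lam) (x₀ := t₀)
    (F := fun t θ => Gf' (Aq p θ.val) (Aq v θ.val) s t / Gf (Aq p θ.val) (Aq v θ.val) s t)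
    (F' := fun t θ => (s ^ 2 * (Aq p θ.val) ^ 2 - (Aq v θ.val) ^ 2) /
      (Gf (Aq p θ.val) (Aq v θ.val) s t) ^ 2)
    (bound := fun _ => s ^ 2 * Real.exp (2 * s * (|t₀| + 1))) (s := Metric.ball t₀ 1)
    (Metric.ball_mem_nhds t₀ one_pos)
    (Filter.Eventually.of_forall fun t =>
      (((continuous_Gf' hvv t).div (continuous_Gf hvv t) fun θ =>
        (Gf_pos (aP_pos hp hp0 θ) hs (bV_sq_le hp hp0 hv hvv θ) t).ne').aestronglyMeasurable))
    (integrable_ratio lam hp hp0 hv hvv t₀)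
    (((continuous_const.mul ((continuous_Aq p).pow 2)).sub ((continuous_Aq v).pow 2)).div
      ((continuous_Gf hvv t₀).pow 2) fun θ => by
        have := Gf_pos (aP_pos hp hp0 θ) hs (bV_sq_le hp hp0 hv hvv θ) t₀
        exact pow_ne_zero _ this.ne').aestronglyMeasurable
    (Filter.Eventually.of_forall fun θ t ht => by
      have ha := aP_pos hp hp0 θ
      have hb := bV_sq_le hp hp0 hv hvv θ
      simp only [Real.norm_eq_abs]
      rw [abs_of_nonneg (ratio_deriv_nonneg ha hs hb t)]
      refine ratio_deriv_le ha hs hb ?_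
      have : |t - t₀| < 1 := by simpa [Real.dist_eq] using ht
      calc |t| = |t₀ + (t - t₀)| := by ring_nf
      _ ≤ |t₀| + |t - t₀| := abs_add_le _ _
      _ ≤ |t₀| + 1 := by linarith)
    (integrable_const _)
    (Filter.Eventually.of_forall fun θ t _ =>
      hasDerivAt_ratio (aP_pos hp hp0 θ) hs (bV_sq_le hp hp0 hv hvv θ) t)
  exact key.2

lemma I2_pos [NullSingletonClass lam] (hp : mink p p = -1) (hp0 : 0 < p 0) (hv : mink p v = 0)
    (hvv : 0 < mink v v) (hpos : 0 < lam Set.univ) (t₀ : ℝ) :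
    0 < ∫ θ, ((Real.sqrt (mink v v)) ^ 2 * (Aq p θ.val) ^ 2 - (Aq v θ.val) ^ 2) /
      (Gf (Aq p θ.val) (Aq v θ.val) (Real.sqrt (mink v v)) t₀) ^ 2 ∂lam := by
  set s := Real.sqrt (mink v v)
  have hs : 0 < s := sqrt_mink_pos hvv
  set f : Metric.sphere (0 : EuclideanSpace ℝ (Fin n)) 1 → ℝ := fun θ =>
    (s ^ 2 * (Aq p θ.val) ^ 2 - (Aq v θ.val) ^ 2) /
      (Gf (Aq p θ.val) (Aq v θ.val) s t₀) ^ 2 with hf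
  have hnonneg : ∀ θ, 0 ≤ f θ := fun θ =>
    ratio_deriv_nonneg (aP_pos hp hp0 θ) hs (bV_sq_le hp hp0 hv hvv θ) t₀
  have hint : Integrable f lam := by
    refine ⟨(((continuous_const.mul ((continuous_Aq p).pow 2)).sub ((continuous_Aq v).pow 2)).div
      ((continuous_Gf hvv t₀).pow 2) fun θ => by
        have := Gf_pos (aP_pos hp hp0 θ) hs (bV_sq_le hp hp0 hv hvv θ) t₀
        exact pow_ne_zero _ this.ne').aestronglyMeasurable, ?_⟩
    refine HasFiniteIntegral.of_bounded (C := s ^ 2 * Real.exp (2 * s * |t₀|))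
      (Filter.Eventually.of_forall fun θ => ?_)
    rw [Real.norm_eq_abs, abs_of_nonneg (hnonneg θ)]
    exact ratio_deriv_le (aP_pos hp hp0 θ) hs (bV_sq_le hp hp0 hv hvv θ) le_rfl
  refine (integral_pos_iff_support_of_nonneg_ae (Filter.Eventually.of_forall hnonneg) hint).2 ?_
  -- the support contains the complement of a two-point set
  set Ebad : Set (Metric.sphere (0 : EuclideanSpace ℝ (Fin n)) 1) :=
    {θ | (Aq v θ.val) ^ 2 = mink v v * (Aq p θ.val) ^ 2} with hEbad
  have hEnull : lam Ebad = 0 := by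
    have hsub : Ebad ⊆ (Subtype.val ⁻¹' {excT p v (-(Real.sqrt (mink v v))⁻¹)}) ∪
        (Subtype.val ⁻¹' {excT p v (Real.sqrt (mink v v))⁻¹}) := by
      intro θ hθ
      rcases eq_excT_of_eq hp hp0 hv hvv (sphere_norm θ) hθ with h | h
      · exact Or.inl h
      · exact Or.inr h
    refine measure_mono_null hsub ?_
    refine measure_union_null ?_ ?_ <;>
      exact Set.Countable.measure_zero
        ((Set.countable_singleton _).preimage Subtype.val_injective) lam
  have hsupp : Set.univ \ Ebad ⊆ Function.support f := by
    intro θ hθ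
    have hne : (Aq v θ.val) ^ 2 ≠ mink v v * (Aq p θ.val) ^ 2 := hθ.2
    have hlt : (Aq v θ.val) ^ 2 < mink v v * (Aq p θ.val) ^ 2 :=
      lt_of_le_of_ne ((key_ineq hp hp0 hv hvv (sphere_norm θ)).1) hne
    have hG := Gf_pos (aP_pos hp hp0 θ) hs (bV_sq_le hp hp0 hv hvv θ) t₀
    have : 0 < f θ := by
      rw [hf]
      have hs2 : s ^ 2 = mink v v := Real.sq_sqrt hvv.le
      apply div_pos
      · rw [hs2]; linarith
      · positivity
    exact ne_of_gt this
  calc (0 : ENNReal) < lam Set.univ := hpos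
  _ = lam (Set.univ \ Ebad) := (measure_diff_null hEnull).symm
  _ ≤ lam (Function.support f) := measure_mono hsupp

end withHyp

/-! ### Geodesics stay on the hyperboloid -/

lemma mink_hypGeod_self (hp : mink p p = -1) (hv : mink p v = 0) (hvv : 0 < Real.sqrt (mink v v) ^ 2)
    (hs2 : Real.sqrt (mink v v) ^ 2 = mink v v) (t : ℝ) :
    mink (hypGeod p v t) (hypGeod p v t) = -1 := by
  set s := Real.sqrt (mink v v)
  have hc := Real.cosh_sq (s * t)
  have hs : s ≠ 0 := by nlinarith
  rw [hypGeod, mink_comb_left, mink_comb_right, mink_comb_right, hp, hv, mink_symm v p, hv, ← hs2]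
  rw [show √(s ^ 2) = s from Real.sqrt_sq (Real.sqrt_nonneg _)]
  field_simp
  linear_combination (-s) * hc

lemma hypGeod_zero_pos (hp : mink p p = -1) (hp0 : 0 < p 0) (hv : mink p v = 0)
    (hvv : 0 < mink v v) (t : ℝ) : 0 < hypGeod p v t 0 := by
  set s := Real.sqrt (mink v v) with hsdef
  have hs2 : s ^ 2 = mink v v := Real.sq_sqrt hvv.le
  have hs : 0 < s := Real.sqrt_pos.2 hvv
  set φ : ℝ → ℝ := fun t => hypGeod p v t 0 with hφ
  have hφ_eq : ∀ t, φ t = Real.cosh (s * t) * p 0 + (Real.sinh (s * t) / s) * v 0 := by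
    intro t; simp [hφ, hypGeod, hsdef]
  have hcont : Continuous φ := by
    rw [funext hφ_eq]
    fun_prop
  have hφ0 : φ 0 = p 0 := by rw [hφ_eq]; simp
  have hsq : ∀ r, 1 ≤ (φ r) ^ 2 := by
    intro r
    have h := mink_self_eq (hypGeod p v r)
    rw [mink_hypGeod_self hp hv (by nlinarith) hs2 r] at h
    have := sq_nonneg ‖tl (hypGeod p v r)‖
    have h2 : (φ r) ^ 2 = 1 + ‖tl (hypGeod p v r)‖ ^ 2 := by
      simp only [hφ]; nlinarith [h]
    nlinarith
  by_contra hle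
  push_neg at hle
  have h1 : φ t ≤ 0 := by simpa [hφ] using hle
  have h0lt : 0 < φ 0 := by rw [hφ0]; exact hp0
  have : (0 : ℝ) ∈ Set.uIcc (φ t) (φ 0) := by
    rw [Set.mem_uIcc]; left; exact ⟨h1, h0lt.le⟩
  have hsub := intermediate_value_uIcc (a := t) (b := 0) hcont.continuousOn
  have : (0 : ℝ) ∈ φ '' Set.uIcc t 0 := hsub (by rw [Set.mem_uIcc]; left; exact ⟨h1, h0lt.le⟩)
  obtain ⟨r, _, hr⟩ := this
  have := hsq r
  rw [hr] at this
  norm_num at this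

/-! ### Connecting geodesics -/

lemma cosh_log_add (c sq : ℝ) (hc : 1 < c) (hsq : sq ^ 2 = c ^ 2 - 1) (hsqpos : 0 < sq) :
    Real.cosh (Real.log (c + sq)) = c ∧ Real.sinh (Real.log (c + sq)) = sq := by
  have hcs : 0 < c + sq := by linarith
  have he : Real.exp (Real.log (c + sq)) = c + sq := Real.exp_log hcs
  have hen : Real.exp (-(Real.log (c + sq))) = (c + sq)⁻¹ := by
    rw [Real.exp_neg, he]
  constructor
  · rw [Real.cosh_eq, he, hen]
    field_simp
    nlinarith
  · rw [Real.sinh_eq, he, hen]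
    field_simp
    nlinarith

/-- for two distinct points on the hyperboloid, the geodesic data joining them -/
lemma exists_joining {p q : Fin (n + 1) → ℝ} (hp : mink p p = -1) (hp0 : 0 < p 0)
    (hq : mink q q = -1) (hq0 : 0 < q 0) (hne : q ≠ p) :
    ∃ w : Fin (n + 1) → ℝ, mink p w = 0 ∧ 0 < mink w w ∧
      ∃ t₁ : ℝ, 0 < t₁ ∧ hypGeod p w t₁ = q := by
  set c : ℝ := -(mink p q) with hc
  set w : Fin (n + 1) → ℝ := q - c • p with hw
  have hw' : q = (1 : ℝ) • w + c • p := by rw [hw]; module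
  have hqw : mink p q = -c := by rw [hc]; ring
  have hpw : mink p w = 0 := by
    have h : mink p q = mink p w + c * mink p p := by rw [hw', mink_comb_right]; ring
    rw [hqw, hp] at h; linarith
  have hww : mink w w = c ^ 2 - 1 := by
    have h : mink q q = mink w w + c * mink w p + c * mink p w + c ^ 2 * mink p p := by
      rw [hw', mink_comb_left, mink_comb_right, mink_comb_right]; ring
    rw [hq, hp, mink_symm w p, hpw] at h
    linarith
  -- c is positive
  have hcpos : 0 < c := by
    have h1 := tl_norm_lt hp hp0
    have h2 := tl_norm_lt hq hq0
    have h3 : (inner ℝ (tl p) (tl q) : ℝ) ≤ ‖tl p‖ * ‖tl q‖ := real_inner_le_norm _ _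
    have h4 := mink_eq_inner p q
    have h5 : ‖tl p‖ * ‖tl q‖ < p 0 * q 0 := by nlinarith [norm_nonneg (tl p), norm_nonneg (tl q)]
    have : mink p q < 0 := by rw [h4]; nlinarith
    rw [hc]; linarith
  have hwne : w ≠ 0 := by
    intro h0
    apply hne
    have hq' : q = c • p := by
      rw [hw] at h0
      have := sub_eq_zero.1 h0
      exact this
    have : mink q q = c ^ 2 * mink p p := by
      rw [hq', mink_smul_left, mink_symm, mink_smul_left]; ring
    rw [hq, hp] at this
    have hc1 : c = 1 := by nlinarith
    rw [hq', hc1, one_smul]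
  have hwwpos : 0 < mink w w := mink_orth_pos hp hp0 hpw hwne
  have hc1 : 1 < c := by nlinarith [hww, hwwpos, hcpos]
  refine ⟨w, hpw, hwwpos, ?_⟩
  set sV := Real.sqrt (mink w w) with hsV
  have hs2 : sV ^ 2 = mink w w := Real.sq_sqrt hwwpos.le
  have hspos : 0 < sV := Real.sqrt_pos.2 hwwpos
  set t₁ : ℝ := Real.log (c + sV) / sV with ht₁def
  have hst : sV * t₁ = Real.log (c + sV) := by
    rw [ht₁def, mul_div_cancel₀]
    exact hspos.ne'
  obtain ⟨hch, hsh⟩ := cosh_log_add c sV hc1 (by rw [hs2, hww]) hspos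
  have hlogpos : 0 < Real.log (c + sV) := Real.log_pos (by linarith)
  refine ⟨t₁, by positivity, ?_⟩
  rw [hypGeod, ← hsV, hst, hch, hsh, div_self hspos.ne']
  rw [hw]
  module

/-! ### Critical implies strict global minimum -/

lemma strict_min_of_critical [NullSingletonClass lam] (hpos : 0 < lam Set.univ)
    (hp : mink p p = -1) (hp0 : 0 < p 0)
    (hcrit : ∀ u : Fin (n + 1) → ℝ, mink p u = 0 →
      deriv (fun t => busemannAvg lam (hypGeod p u t)) 0 = 0)
    {q : Fin (n + 1) → ℝ} (hq : mink q q = -1) (hq0 : 0 < q 0) (hne : q ≠ p) :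
    busemannAvg lam p < busemannAvg lam q := by
  obtain ⟨w, hpw, hww, t₁, ht₁, hgeo⟩ := exists_joining hp hp0 hq hq0 hne
  set s := Real.sqrt (mink w w) with hsdef
  set h : ℝ → ℝ := fun t => busemannAvg lam (hypGeod p w t) with hh
  set I1 : ℝ → ℝ := fun t => ∫ θ, Gf' (Aq p θ.val) (Aq w θ.val) s t /
    Gf (Aq p θ.val) (Aq w θ.val) s t ∂lam with hI1
  have hd1 : ∀ t, HasDerivAt h (I1 t) t := fun t => hasDerivAt_bAvg lam hp hp0 hpw hww t
  have hd2 : ∀ t, HasDerivAt I1 (∫ θ, (s ^ 2 * (Aq p θ.val) ^ 2 - (Aq w θ.val) ^ 2) /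
      (Gf (Aq p θ.val) (Aq w θ.val) s t) ^ 2 ∂lam) t := fun t =>
    hasDerivAt_I1 lam hp hp0 hpw hww t
  have hI2pos : ∀ t, 0 < ∫ θ, (s ^ 2 * (Aq p θ.val) ^ 2 - (Aq w θ.val) ^ 2) /
      (Gf (Aq p θ.val) (Aq w θ.val) s t) ^ 2 ∂lam := fun t =>
    I2_pos lam hp hp0 hpw hww hpos t
  have hI1mono : StrictMono I1 := by
    apply strictMono_of_deriv_pos
    intro t
    rw [(hd2 t).deriv]
    exact hI2pos t
  have hI10 : I1 0 = 0 := by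
    have := hcrit w hpw
    rw [← hh] at this
    rw [← (hd1 0).deriv]
    exact this
  have hI1posOn : ∀ t, 0 < t → 0 < I1 t := by
    intro t ht
    rw [← hI10]
    exact hI1mono ht
  have hmono : StrictMonoOn h (Set.Icc 0 t₁) := by
    apply strictMonoOn_of_deriv_pos (convex_Icc 0 t₁)
    · exact fun t _ => ((hd1 t).differentiableAt).continuousAt.continuousWithinAt
    · intro t ht
      rw [interior_Icc] at ht
      rw [(hd1 t).deriv]
      exact hI1posOn t ht.1
  have := hmono (Set.left_mem_Icc.2 ht₁.le) (Set.right_mem_Icc.2 ht₁.le) ht₁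
  rw [hh] at this
  simp only [hypGeod_zero, hgeo] at this
  exact this

end parametric

/-! ### Properness -/

section properness

variable {n : ℕ} (lam : Measure (Metric.sphere (0 : EuclideanSpace ℝ (Fin n)) 1))
  [IsFiniteMeasure lam]

lemma caps_small [NullSingletonClass lam] {ε : ENNReal} (hε : 0 < ε) :
    ∃ r : ℝ, 0 < r ∧ ∀ x : Metric.sphere (0 : EuclideanSpace ℝ (Fin n)) 1,
      lam (Metric.ball x r) < ε := by
  by_contra hcon
  push_neg at hcon
  have hex : ∀ k : ℕ, ∃ x : Metric.sphere (0 : EuclideanSpace ℝ (Fin n)) 1,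
      ε ≤ lam (Metric.ball x (1 / (k + 1))) := fun k => hcon (1 / (k + 1)) (by positivity)
  choose x hx using hex
  obtain ⟨a, -, φ, hφ, hconv⟩ := isCompact_univ.tendsto_subseq (x := x) fun k => Set.mem_univ _
  have hball : ∀ ρ : ℝ, 0 < ρ → ε ≤ lam (Metric.ball a ρ) := by
    intro ρ hρ
    obtain ⟨K, hK⟩ := Metric.tendsto_atTop.1 hconv (ρ / 2) (by positivity)
    obtain ⟨k₁, hk₁⟩ := exists_nat_one_div_lt (show (0:ℝ) < ρ / 2 by positivity)
    set k := max K k₁ with hk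
    have hdist : dist (x (φ k)) a < ρ / 2 := hK k (le_max_left _ _)
    have hrad : (1 : ℝ) / (φ k + 1) < ρ / 2 := by
      have h1 : (k : ℝ) + 1 ≤ (φ k : ℝ) + 1 := by
        have : k ≤ φ k := hφ.le_apply
        push_cast; linarith [(Nat.cast_le (α := ℝ)).2 this]
      have h2 : (k₁ : ℝ) + 1 ≤ (k : ℝ) + 1 := by
        have : k₁ ≤ k := le_max_right _ _
        push_cast; linarith [(Nat.cast_le (α := ℝ)).2 this]
      calc (1 : ℝ) / (φ k + 1) ≤ 1 / (k₁ + 1) := by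
            apply one_div_le_one_div_of_le (by positivity); linarith
      _ < ρ / 2 := hk₁
    have hsub : Metric.ball (x (φ k)) (1 / (φ k + 1)) ⊆ Metric.ball a ρ := by
      intro y hy
      rw [Metric.mem_ball] at hy ⊢
      calc dist y a ≤ dist y (x (φ k)) + dist (x (φ k)) a := dist_triangle _ _ _
      _ < 1 / (φ k + 1) + ρ / 2 := by linarith
      _ < ρ := by linarith
    exact le_trans (hx (φ k)) (measure_mono hsub)
  have hsingle : (⋂ k : ℕ, Metric.ball a (1 / (k + 1))) = {a} := by
    ext y
    simp only [Set.mem_iInter, Metric.mem_ball, Set.mem_singleton_iff]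
    constructor
    · intro h
      have : dist y a ≤ 0 := by
        by_contra hd
        push_neg at hd
        obtain ⟨k, hk⟩ := exists_nat_one_div_lt hd
        exact absurd (h k) (by push_cast; linarith)
      have := dist_nonneg (x := y) (y := a)
      exact dist_le_zero.1 (by linarith)
    · intro h; subst h; intro k; rw [dist_self]; positivity
  have htend := tendsto_measure_iInter_atTop (μ := lam)
    (s := fun k : ℕ => Metric.ball a (1 / (k + 1)))
    (fun k => measurableSet_ball.nullMeasurableSet)
    (fun k l hkl => Metric.ball_subset_ball (by
      apply one_div_le_one_div_of_le (by positivity)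
      have : (k : ℝ) ≤ l := Nat.cast_le.2 hkl
      linarith))
    ⟨0, measure_ne_top lam _⟩
  rw [hsingle] at htend
  have hzero : lam {a} = 0 := measure_singleton a
  rw [hzero] at htend
  have hge : ε ≤ 0 := ge_of_tendsto' htend fun k => hball _ (by positivity)
  exact absurd (lt_of_le_of_lt hge hε) (by simp)

lemma continuous_tl : Continuous (tl : (Fin (n + 1) → ℝ) → EuclideanSpace ℝ (Fin n)) := by
  have h : Continuous (fun q : Fin (n + 1) → ℝ => (fun i => q i.succ : Fin n → ℝ)) :=
    continuous_pi fun i => continuous_apply i.succ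
  exact (PiLp.continuous_toLp 2 (fun _ : Fin n => ℝ)).comp h

lemma continuous_normtl : Continuous (fun x : Fin (n + 1) → ℝ => ‖tl x‖) :=
  continuous_norm.comp continuous_tl

lemma continuous_Aq_q (θ : EuclideanSpace ℝ (Fin n)) :
    Continuous (fun x : Fin (n + 1) → ℝ => Aq x θ) := by
  have h : (fun x : Fin (n + 1) → ℝ => Aq x θ) =
      fun x => x 0 - ∑ i : Fin n, x i.succ * θ i := by
    funext x; rw [Aq, inner_tl]
  rw [h]
  exact (continuous_apply 0).sub
    (continuous_finset_sum _ fun i _ => (continuous_apply i.succ).mul continuous_const)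

lemma bAvg_eq_log (x : Fin (n + 1) → ℝ) :
    busemannAvg lam x = ∫ θ, Real.log (Aq x θ.val) ∂lam := by
  unfold busemannAvg
  exact integral_congr_ae (Filter.Eventually.of_forall fun θ => busemannSph_eq _ _)

lemma integrable_busemann {q : Fin (n + 1) → ℝ} (hq : ‖tl q‖ < q 0) :
    Integrable (fun θ : Metric.sphere (0 : EuclideanSpace ℝ (Fin n)) 1 =>
      Real.log (Aq q θ.val)) lam := by
  have hL : 0 < q 0 - ‖tl q‖ := by linarith
  refine ⟨(Real.measurable_log.comp (continuous_Aq q).measurable).aestronglyMeasurable, ?_⟩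
  refine HasFiniteIntegral.of_bounded (C := |Real.log (q 0 - ‖tl q‖)| + |Real.log (q 0 + ‖tl q‖)|)
    (Filter.Eventually.of_forall fun θ => ?_)
  exact abs_log_le hL (Aq_lb q (sphere_norm θ)) (Aq_ub q (sphere_norm θ))

lemma bAvg_continuousAt {q : Fin (n + 1) → ℝ} (hq : ‖tl q‖ < q 0) :
    ContinuousAt (busemannAvg lam) q := by
  have hrw : busemannAvg lam = fun x => ∫ θ, Real.log (Aq x θ.val) ∂lam :=
    funext fun x => bAvg_eq_log lam x
  rw [hrw]
  set η : ℝ := (q 0 - ‖tl q‖) / 2 with hη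
  set M : ℝ := |q 0| + ‖tl q‖ + 1 with hM
  have hηpos : 0 < η := by rw [hη]; linarith
  set U : Set (Fin (n + 1) → ℝ) := {x | η < x 0 - ‖tl x‖ ∧ |x 0| + ‖tl x‖ < M} with hUdef
  have hUopen : IsOpen U :=
    (isOpen_lt continuous_const ((continuous_apply 0).sub continuous_normtl)).inter
      (isOpen_lt ((continuous_abs.comp (continuous_apply 0)).add continuous_normtl)
        continuous_const)
  have hqU : q ∈ U := by
    constructor
    · show η < q 0 - ‖tl q‖; rw [hη]; linarith
    · show |q 0| + ‖tl q‖ < M; rw [hM]; linarith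
  have hnhds : ∀ᶠ x in nhds q, x ∈ U := hUopen.mem_nhds hqU
  refine continuousAt_of_dominated (bound := fun _ => |Real.log η| + |Real.log M|) ?_ ?_ ?_ ?_
  · exact Filter.Eventually.of_forall fun x =>
      (Real.measurable_log.comp (continuous_Aq x).measurable).aestronglyMeasurable
  · refine hnhds.mono fun x hx => Filter.Eventually.of_forall fun θ => ?_
    have h1 : η ≤ Aq x θ.val := le_trans hx.1.le (Aq_lb x (sphere_norm θ))
    have h2 : Aq x θ.val ≤ M := by
      refine le_trans (Aq_ub x (sphere_norm θ)) (le_trans ?_ hx.2.le)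
      have := le_abs_self (x 0); linarith
    exact abs_log_le hηpos h1 h2
  · exact integrable_const _
  · refine Filter.Eventually.of_forall fun θ => ?_
    have hpos : 0 < Aq q θ.val := lt_of_lt_of_le (by linarith) (Aq_lb q (sphere_norm θ))
    exact ((continuous_Aq_q θ.val).continuousAt).log hpos.ne'

/-- Main lower bound on `busemannAvg` for points far from the basepoint. -/
lemma F_lower {q : Fin (n + 1) → ℝ} (hq : mink q q = -1) (hq0 : 0 < q 0) {δ : ℝ}
    (hδ : 0 < δ) (hδ1 : δ ≤ 1) (hr1 : 1 ≤ ‖tl q‖) (hrδ : 1 ≤ ‖tl q‖ * δ)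
    {B : Set (Metric.sphere (0 : EuclideanSpace ℝ (Fin n)) 1)} (hB : MeasurableSet B)
    (hout : ∀ θ ∉ B, ‖tl q‖ * δ ≤ Aq q θ.val)
    (hBsmall : (lam B).toReal ≤ (lam Set.univ).toReal / 4) :
    (lam Set.univ).toReal / 2 * Real.log ‖tl q‖ +
      (3 * (lam Set.univ).toReal / 4 * Real.log δ
        - (lam Set.univ).toReal / 4 * Real.log 3) ≤ busemannAvg lam q := by
  set r : ℝ := ‖tl q‖ with hr
  set m : ℝ := (lam Set.univ).toReal with hmdef
  have hrpos : 0 < r := by linarith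
  have hmnn : 0 ≤ m := ENNReal.toReal_nonneg
  have hqsq : q 0 ^ 2 = 1 + r ^ 2 := by
    have := mink_self_eq q; rw [hq] at this; rw [hr]; nlinarith
  have hq2r : q 0 ≤ 2 * r := by nlinarith
  have hqr : r < q 0 := tl_norm_lt hq hq0
  have hAqlow : ∀ θ : Metric.sphere (0 : EuclideanSpace ℝ (Fin n)) 1,
      1 / (3 * r) ≤ Aq q θ.val := by
    intro θ
    have h1 := Aq_lb q (sphere_norm θ)
    have h2 : (q 0 - r) * (q 0 + r) = 1 := by nlinarith
    have h3 : 1 / (3 * r) ≤ q 0 - r := by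
      rw [div_le_iff₀ (by positivity)]
      nlinarith
    linarith
  have hint : Integrable (fun θ : Metric.sphere (0 : EuclideanSpace ℝ (Fin n)) 1 =>
      Real.log (Aq q θ.val)) lam := integrable_busemann lam hqr
  have hsplit : (∫ θ in B, Real.log (Aq q θ.val) ∂lam) +
      (∫ θ in Bᶜ, Real.log (Aq q θ.val) ∂lam) = ∫ θ, Real.log (Aq q θ.val) ∂lam :=
    integral_add_compl hB hint
  have hBc_bound : Real.log (r * δ) * (lam Bᶜ).toReal ≤
      ∫ θ in Bᶜ, Real.log (Aq q θ.val) ∂lam := by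
    rw [mul_comm, ← smul_eq_mul, ← measureReal_def]
    refine setIntegral_ge_of_const_le hB.compl (measure_ne_top _ _) (fun θ hθ => ?_)
      hint.integrableOn
    exact Real.log_le_log (by positivity) (hout θ hθ)
  have hB_bound : (-(Real.log 3 + Real.log r)) * (lam B).toReal ≤
      ∫ θ in B, Real.log (Aq q θ.val) ∂lam := by
    rw [mul_comm, ← smul_eq_mul, ← measureReal_def]
    refine setIntegral_ge_of_const_le hB (measure_ne_top _ _) (fun θ _ => ?_)
      hint.integrableOn
    have h1 := hAqlow θ
    have h2 : Real.log (1 / (3 * r)) ≤ Real.log (Aq q θ.val) :=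
      Real.log_le_log (by positivity) h1
    have h3 : Real.log (1 / (3 * r)) = -(Real.log 3 + Real.log r) := by
      rw [one_div, Real.log_inv, Real.log_mul (by norm_num) hrpos.ne']
    linarith
  have hcompl : (lam Bᶜ).toReal = m - (lam B).toReal := by
    rw [hmdef, measure_compl hB (measure_ne_top _ _),
      ENNReal.toReal_sub_of_le (measure_mono (Set.subset_univ _)) (measure_ne_top _ _)]
  have hlogr : 0 ≤ Real.log r := Real.log_nonneg hr1
  have hlogrδ : 0 ≤ Real.log (r * δ) := Real.log_nonneg hrδ
  have hlog3 : 0 < Real.log 3 := Real.log_pos (by norm_num)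
  have hlogsplit : Real.log (r * δ) = Real.log r + Real.log δ :=
    Real.log_mul hrpos.ne' hδ.ne'
  set xB : ℝ := (lam B).toReal with hxB
  have hxBnn : 0 ≤ xB := ENNReal.toReal_nonneg
  have h1 : -(Real.log 3 + Real.log r) * (m / 4) ≤ -(Real.log 3 + Real.log r) * xB := by
    have : xB * (Real.log 3 + Real.log r) ≤ m / 4 * (Real.log 3 + Real.log r) :=
      mul_le_mul_of_nonneg_right hBsmall (by linarith)
    nlinarith
  have h2 : Real.log (r * δ) * (3 * m / 4) ≤ Real.log (r * δ) * (m - xB) :=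
    mul_le_mul_of_nonneg_left (by linarith) hlogrδ
  rw [bAvg_eq_log]
  rw [← hsplit]
  rw [hcompl] at hBc_bound
  nlinarith [hB_bound, hBc_bound, h1, h2, hlogsplit]

lemma coord_le_norm (x : EuclideanSpace ℝ (Fin n)) (i : Fin n) : |x i| ≤ ‖x‖ := by
  rw [EuclideanSpace.norm_eq, ← Real.sqrt_sq_eq_abs]
  apply Real.sqrt_le_sqrt
  calc x i ^ 2 = ‖x i‖ ^ 2 := by rw [Real.norm_eq_abs, sq_abs]
  _ ≤ ∑ j, ‖x j‖ ^ 2 :=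
      Finset.single_le_sum (fun j _ => sq_nonneg ‖x j‖) (Finset.mem_univ i)

lemma continuous_mink_self : Continuous fun p : Fin (n + 1) → ℝ => mink p p := by
  unfold mink
  exact (((continuous_apply (0 : Fin (n+1))).mul (continuous_apply 0)).neg).add
    (continuous_finset_sum _ fun i _ => (continuous_apply i.succ).mul (continuous_apply i.succ))

lemma hypGeod_zero_vec (p : Fin (n + 1) → ℝ) (t : ℝ) : hypGeod p 0 t = p := by
  have h0 : mink (0 : Fin (n + 1) → ℝ) 0 = 0 := by simp [mink]
  funext i
  simp [hypGeod, h0, Real.sqrt_zero]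

set_option maxHeartbeats 1000000 in
lemma sublevel_compact [NullSingletonClass lam] (hpos : 0 < lam Set.univ) (c : ℝ) :
    IsCompact {p : Fin (n + 1) → ℝ | (mink p p = -1 ∧ 0 < p 0) ∧ busemannAvg lam p ≤ c} := by
  set m : ℝ := (lam Set.univ).toReal with hm
  have hmpos : 0 < m := ENNReal.toReal_pos hpos.ne' (measure_ne_top _ _)
  obtain ⟨ρ, hρpos, hcap⟩ := caps_small lam (ε := lam Set.univ / 4)
    (ENNReal.div_pos hpos.ne' (by norm_num))
  set δ : ℝ := min (ρ ^ 2 / 2) 1 with hδdef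
  have hδpos : 0 < δ := lt_min (by positivity) one_pos
  have hδ1 : δ ≤ 1 := min_le_right _ _
  have hδρ : δ ≤ ρ ^ 2 / 2 := min_le_left _ _
  set K₀ : ℝ := 3 * m / 4 * Real.log δ - m / 4 * Real.log 3 with hK₀
  set R : ℝ := max (max 1 δ⁻¹) (Real.exp ((c - K₀ + 1) * (2 / m))) with hR
  have hR1 : (1:ℝ) ≤ R := le_trans (le_max_left _ _) (le_max_left _ _)
  set S := {p : Fin (n + 1) → ℝ | (mink p p = -1 ∧ 0 < p 0) ∧ busemannAvg lam p ≤ c} with hS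
  have htail : ∀ q ∈ S, ‖tl q‖ ≤ R := by
    intro q hqS
    obtain ⟨⟨hq, hq0⟩, hqc⟩ := hqS
    by_contra hcon
    push_neg at hcon
    have hr1 : (1:ℝ) ≤ ‖tl q‖ := le_trans hR1 hcon.le
    have hrpos : (0:ℝ) < ‖tl q‖ := by linarith
    have hqsq : q 0 ^ 2 = 1 + ‖tl q‖ ^ 2 := by
      have := mink_self_eq q; rw [hq] at this; nlinarith
    have hq0r : ‖tl q‖ ≤ q 0 := by nlinarith
    have hrδ : 1 ≤ ‖tl q‖ * δ := by
      have h3 : δ⁻¹ ≤ R := le_trans (le_max_right _ _) (le_max_left _ _)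
      have h4 : δ⁻¹ ≤ ‖tl q‖ := by linarith
      calc (1:ℝ) = δ⁻¹ * δ := by rw [inv_mul_cancel₀ hδpos.ne']
      _ ≤ ‖tl q‖ * δ := mul_le_mul_of_nonneg_right h4 hδpos.le
    set u : EuclideanSpace ℝ (Fin n) := (‖tl q‖)⁻¹ • tl q with hu
    have hunorm : ‖u‖ = 1 := by
      rw [hu, norm_smul, norm_inv, Real.norm_eq_abs, abs_of_pos hrpos,
        inv_mul_cancel₀ hrpos.ne']
    set upt : Metric.sphere (0 : EuclideanSpace ℝ (Fin n)) 1 :=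
      ⟨u, by rwa [mem_sphere_zero_iff_norm]⟩ with hupt
    have htlq : tl q = ‖tl q‖ • u := by
      rw [hu, smul_smul, mul_inv_cancel₀ hrpos.ne', one_smul]
    have hout : ∀ θ ∉ Metric.ball upt ρ, ‖tl q‖ * δ ≤ Aq q θ.val := by
      intro θ hθ
      have hd : ρ ≤ dist θ upt := not_lt.1 fun h => hθ (Metric.mem_ball.2 h)
      have hdval : ρ ≤ ‖θ.val - u‖ := by
        rw [← dist_eq_norm]
        rw [Subtype.dist_eq] at hd
        exact hd
      have hn := norm_sub_sq_real (θ.val) u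
      rw [sphere_norm θ, hunorm] at hn
      have hsq : ρ ^ 2 ≤ ‖θ.val - u‖ ^ 2 := by nlinarith [norm_nonneg (θ.val - u)]
      have h5 : (inner ℝ u θ.val : ℝ) ≤ 1 - ρ ^ 2 / 2 := by
        have hcm := real_inner_comm u θ.val
        nlinarith
      have hinner_eq : (inner ℝ (tl q) θ.val : ℝ) = ‖tl q‖ * inner ℝ u θ.val := by
        conv_lhs => rw [htlq]
        rw [real_inner_smul_left]
      have hAq : Aq q θ.val = q 0 - inner ℝ (tl q) θ.val := rfl
      rw [hAq, hinner_eq]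
      have h6 : ‖tl q‖ * (inner ℝ u θ.val : ℝ) ≤ ‖tl q‖ * (1 - ρ ^ 2 / 2) :=
        mul_le_mul_of_nonneg_left h5 hrpos.le
      have h7 : ‖tl q‖ * δ ≤ ‖tl q‖ * (ρ ^ 2 / 2) := mul_le_mul_of_nonneg_left hδρ hrpos.le
      nlinarith [h6, h7, hq0r]
    have hBsmall : (lam (Metric.ball upt ρ)).toReal ≤ m / 4 := by
      have h6 := (hcap upt).le
      have h7 : (lam (Metric.ball upt ρ)).toReal ≤ (lam Set.univ / 4).toReal :=
        ENNReal.toReal_mono (by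
          exact (ENNReal.div_lt_top (measure_ne_top _ _) (by norm_num)).ne) h6
      rwa [ENNReal.toReal_div, show ((4:ENNReal)).toReal = 4 by norm_num] at h7
    have hFlow := F_lower lam hq hq0 hδpos hδ1 hr1 hrδ measurableSet_ball hout hBsmall
    have hlogR : (c - K₀ + 1) * (2 / m) < Real.log ‖tl q‖ := by
      rw [Real.lt_log_iff_exp_lt hrpos]
      exact lt_of_le_of_lt (le_max_right _ _) hcon
    have : c + 1 ≤ busemannAvg lam q := by
      have h8 : m / 2 * ((c - K₀ + 1) * (2 / m)) = c - K₀ + 1 := by field_simp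
      nlinarith [hFlow]
    linarith
  apply Metric.isCompact_of_isClosed_isBounded
  · have hAeq : {p : Fin (n + 1) → ℝ | mink p p = -1 ∧ 0 < p 0} =
        {p : Fin (n + 1) → ℝ | mink p p = -1} ∩ {p | 1 ≤ p 0} := by
      ext p
      simp only [Set.mem_setOf_eq, Set.mem_inter_iff]
      constructor
      · rintro ⟨h1, h2⟩
        refine ⟨h1, ?_⟩
        have := mink_self_eq p; rw [h1] at this
        nlinarith [sq_nonneg ‖tl p‖]
      · rintro ⟨h1, h2⟩; exact ⟨h1, by linarith⟩
    have hAclosed : IsClosed {p : Fin (n + 1) → ℝ | mink p p = -1 ∧ 0 < p 0} := by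
      rw [hAeq]
      exact (isClosed_eq continuous_mink_self continuous_const).inter
        (isClosed_le continuous_const (continuous_apply 0))
    exact ContinuousOn.preimage_isClosed_of_isClosed
      (fun p hp => (bAvg_continuousAt lam (tl_norm_lt hp.1 hp.2)).continuousWithinAt)
      hAclosed isClosed_Iic
  · rw [isBounded_iff_forall_norm_le]
    refine ⟨1 + R, fun q hq => ?_⟩
    have hr := htail q hq
    obtain ⟨⟨hq1, hq0⟩, -⟩ := hq
    have hqsq : q 0 ^ 2 = 1 + ‖tl q‖ ^ 2 := by
      have := mink_self_eq q; rw [hq1] at this; nlinarith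
    rw [pi_norm_le_iff_of_nonneg (by positivity)]
    intro i
    refine Fin.cases ?_ (fun j => ?_) i
    · rw [Real.norm_eq_abs, abs_of_pos hq0]
      nlinarith [norm_nonneg (tl q)]
    · rw [Real.norm_eq_abs]
      have hj : |q j.succ| ≤ ‖tl q‖ := by
        have := coord_le_norm (tl q) j
        rwa [tl_apply] at this
      linarith [norm_nonneg (tl q)]

end properness

end BAvg

open BAvg

/-- Let `λ` be an atomless positive finite Radon measure on `∂ℍⁿ`.  Then
`B_λ(p) = ∫ B_θ(p) dλ(θ)` is proper (its sublevel sets in `ℍⁿ` are compact), strictly convex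
(its Hessian, i.e. the second derivative along every nontrivial geodesic, is positive), and
it has a unique critical point in `ℍⁿ`, which is its unique global minimum. -/
theorem busemannAvg_proper_convex_min {n : ℕ} (hn : 2 ≤ n)
    (lam : Measure (Metric.sphere (0 : EuclideanSpace ℝ (Fin n)) 1))
    [IsFiniteMeasure lam] [NullSingletonClass lam] (hpos : 0 < lam Set.univ) :
    (∀ c : ℝ, IsCompact {p : Fin (n + 1) → ℝ |
        (mink p p = -1 ∧ 0 < p 0) ∧ busemannAvg lam p ≤ c}) ∧
    (∀ p : Fin (n + 1) → ℝ, mink p p = -1 → 0 < p 0 →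
        ∀ v : Fin (n + 1) → ℝ, mink p v = 0 → v ≠ 0 →
          0 < iteratedDeriv 2 (fun t => busemannAvg lam (hypGeod p v t)) 0) ∧
    (∃ p : Fin (n + 1) → ℝ, (mink p p = -1 ∧ 0 < p 0) ∧
        (∀ v : Fin (n + 1) → ℝ, mink p v = 0 →
          deriv (fun t => busemannAvg lam (hypGeod p v t)) 0 = 0) ∧
        (∀ q : Fin (n + 1) → ℝ, mink q q = -1 → 0 < q 0 → q ≠ p →
          busemannAvg lam p < busemannAvg lam q) ∧
        (∀ p' : Fin (n + 1) → ℝ, mink p' p' = -1 → 0 < p' 0 →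
          (∀ v : Fin (n + 1) → ℝ, mink p' v = 0 →
            deriv (fun t => busemannAvg lam (hypGeod p' v t)) 0 = 0) → p' = p)) := by
  refine ⟨sublevel_compact lam hpos, ?_, ?_⟩
  · -- strict convexity
    intro p hp hp0 v hv hvne
    have hvv := mink_orth_pos hp hp0 hv hvne
    have h1 : deriv (fun t => busemannAvg lam (hypGeod p v t)) =
        fun t => ∫ θ, Gf' (Aq p θ.val) (Aq v θ.val) (Real.sqrt (mink v v)) t /
          Gf (Aq p θ.val) (Aq v θ.val) (Real.sqrt (mink v v)) t ∂lam :=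
      funext fun t => (hasDerivAt_bAvg lam hp hp0 hv hvv t).deriv
    rw [iteratedDeriv_succ, iteratedDeriv_one, h1,
      (hasDerivAt_I1 lam hp hp0 hv hvv 0).deriv]
    exact I2_pos lam hp hp0 hv hvv hpos 0
  · -- existence / uniqueness of the minimum
    set o : Fin (n + 1) → ℝ := fun i => if i = 0 then 1 else 0 with ho
    have ho0 : o 0 = 1 := rfl
    have hom : mink o o = -1 := by
      unfold mink
      simp [ho, Fin.succ_ne_zero]
    set c₀ : ℝ := busemannAvg lam o with hc₀
    set K := {x : Fin (n + 1) → ℝ | (mink x x = -1 ∧ 0 < x 0) ∧ busemannAvg lam x ≤ c₀}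
      with hKdef
    have hoK : o ∈ K := ⟨⟨hom, by rw [ho0]; norm_num⟩, le_rfl⟩
    have hKc : IsCompact K := sublevel_compact lam hpos c₀
    have hcont : ContinuousOn (busemannAvg lam) K := fun x hx =>
      (bAvg_continuousAt lam (tl_norm_lt hx.1.1 hx.1.2)).continuousWithinAt
    obtain ⟨p, hpK, hpmin⟩ := hKc.exists_isMinOn ⟨o, hoK⟩ hcont
    obtain ⟨⟨hp, hp0⟩, hpc⟩ := hpK
    have hglobal : ∀ q : Fin (n + 1) → ℝ, mink q q = -1 → 0 < q 0 →
        busemannAvg lam p ≤ busemannAvg lam q := by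
      intro q hq hq0
      by_cases hqc : busemannAvg lam q ≤ c₀
      · exact hpmin ⟨⟨hq, hq0⟩, hqc⟩
      · push_neg at hqc
        have := hpmin hoK
        calc busemannAvg lam p ≤ busemannAvg lam o := this
        _ = c₀ := rfl
        _ ≤ busemannAvg lam q := hqc.le
    have hcrit : ∀ v : Fin (n + 1) → ℝ, mink p v = 0 →
        deriv (fun t => busemannAvg lam (hypGeod p v t)) 0 = 0 := by
      intro v hv
      rcases eq_or_ne v 0 with rfl | hvne
      · have hconst : (fun t => busemannAvg lam (hypGeod p 0 t)) =
            fun _ => busemannAvg lam p := by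
          funext t; rw [hypGeod_zero_vec]
        rw [hconst, deriv_const]
      · have hvv := mink_orth_pos hp hp0 hv hvne
        have hs2 : Real.sqrt (mink v v) ^ 2 = mink v v := Real.sq_sqrt hvv.le
        apply IsLocalMin.deriv_eq_zero
        have hmin : ∀ t : ℝ, busemannAvg lam (hypGeod p v 0) ≤
            busemannAvg lam (hypGeod p v t) := by
          intro t
          rw [hypGeod_zero]
          exact hglobal _ (mink_hypGeod_self hp hv (by rw [hs2]; exact hvv) hs2 t)
            (hypGeod_zero_pos hp hp0 hv hvv t)
        have : IsMinOn (fun t => busemannAvg lam (hypGeod p v t)) Set.univ 0 := by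
          intro t _
          exact hmin t
        exact this.isLocalMin Filter.univ_mem
    refine ⟨p, ⟨hp, hp0⟩, hcrit, ?_, ?_⟩
    · intro q hq hq0 hne
      exact strict_min_of_critical lam hpos hp hp0 hcrit hq hq0 hne
    · intro p' hp' hp'0 hcrit'
      by_contra hne
      have h1 := strict_min_of_critical lam hpos hp' hp'0 hcrit' hp hp0
        (fun h => hne h.symm)
      have h2 := strict_min_of_critical lam hpos hp hp0 hcrit hp' hp'0 hne
      linarith

end
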